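/- Let n > 2, let V = 𝔽₂ⁿ, and let g ∈ Sym(V) be such that T ≠ T^g, where T^g = g⁻¹Tg. If W ≤ V is a subspace such that σ_W = T ∩ T^g, then dim(W) ≤ n − 2. -/

import Mathlib

open Equiv

/-- `V n` is the `n`-dimensional vector space over the field with two elements. -/
abbrev V (n : ℕ) : Type := Fin n → ZMod 2

/-- The subgroup `σ_W` of `Sym(V)` consisting of the translations `x ↦ x + w` with `w ∈ W`. -/
def sigmaSub (n : ℕ) (W : Submodule (ZMod 2) (V n)) : Subgroup (Equiv.Perm (V n)) where
  carrier := {g | ∃ v ∈ W, ∀ x, g x = x + v}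
  one_mem' := ⟨0, W.zero_mem, fun x => by simp⟩
  mul_mem' := by
    rintro a b ⟨v, hv, ha⟩ ⟨w, hw, hb⟩
    exact ⟨w + v, W.add_mem hw hv, fun x => by
      simp [Equiv.Perm.mul_apply, ha, hb, add_assoc]⟩
  inv_mem' := by
    rintro a ⟨v, hv, ha⟩
    refine ⟨-v, W.neg_mem hv, fun x => a.injective ?_⟩
    rw [show a (a⁻¹ x) = x from (Equiv.eq_symm_apply a).mp rfl, ha]
    abel

/-- The translation group `T`, i.e. the image of the right regular representation
of `(V, +)` in `Sym(V)`. -/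
def T (n : ℕ) : Subgroup (Equiv.Perm (V n)) := sigmaSub n ⊤

/-- The affine group `AGL(V) = T ⋊ GL(V)`, consisting of the invertible affine
transformations `x ↦ L x + v` of `V`. -/
def AGL (n : ℕ) : Subgroup (Equiv.Perm (V n)) where
  carrier := {g | ∃ (L : V n ≃ₗ[ZMod 2] V n) (v : V n), ∀ x, g x = L x + v}
  one_mem' := ⟨LinearEquiv.refl _ _, 0, fun x => by simp⟩
  mul_mem' := by
    rintro a b ⟨L, v, ha⟩ ⟨M, w, hb⟩
    exact ⟨M ≪≫ₗ L, L w + v, fun x => by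
      simp [Equiv.Perm.mul_apply, ha, hb, map_add, add_assoc]⟩
  inv_mem' := by
    rintro a ⟨L, v, ha⟩
    refine ⟨L.symm, -(L.symm v), fun x => a.injective ?_⟩
    rw [show a (a⁻¹ x) = x from (Equiv.eq_symm_apply a).mp rfl, ha, map_add, map_neg, LinearEquiv.apply_symm_apply,
      LinearEquiv.apply_symm_apply]
    abel

/-- The conjugate subgroup `H^g = g⁻¹ H g`. -/
def conjSub {G : Type*} [Group G] (H : Subgroup G) (g : G) : Subgroup G :=
  H.map (MulAut.conj g⁻¹).toMonoidHom

/-- A subgroup of `Sym(V)` is an elementary abelian regular subgroup if it is an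
elementary abelian 2-group (every element squares to the identity) acting
regularly (sharply transitively) on `V`. -/
def IsElemAbelianRegular (n : ℕ) (R : Subgroup (Equiv.Perm (V n))) : Prop :=
  (∀ r ∈ R, r * r = 1) ∧ ∀ x y : V n, ∃! r : R, (r : Equiv.Perm (V n)) x = y

/-- `A` is a normal subgroup of `B` (as subgroups of a common ambient group). -/
def NormalIn {G : Type*} [Group G] (A B : Subgroup G) : Prop :=
  A ≤ B ∧ ∀ b ∈ B, ∀ a ∈ A, b * a * b⁻¹ ∈ A

/-- `S` is a Sylow `2`-subgroup of `K` (as subgroups of a common ambient group):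
`S` is a `2`-subgroup of `K` maximal among the `2`-subgroups of `K`. -/
def IsSylow2Of {G : Type*} [Group G] (S K : Subgroup G) : Prop :=
  S ≤ K ∧ IsPGroup 2 S ∧ ∀ Q : Subgroup G, Q ≤ K → IsPGroup 2 Q → S ≤ Q → Q = S

lemma Vadd_self {n : ℕ} (v : V n) : v + v = 0 :=
  funext fun i => by
    have : ∀ a : ZMod 2, a + a = 0 := by decide
    exact this (v i)

lemma mem_T (n : ℕ) (u : V n) : Equiv.addRight u ∈ T n :=
  ⟨u, trivial, fun _ => rfl⟩

lemma T_mul_comm (n : ℕ) : ∀ a ∈ T n, ∀ b ∈ T n, a * b = b * a := by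
  rintro a ⟨u, -, ha⟩ b ⟨w, -, hb⟩
  ext x
  simp only [Equiv.Perm.mul_apply, ha, hb, add_right_comm]

lemma T_sq (n : ℕ) : ∀ a ∈ T n, a * a = 1 := by
  rintro a ⟨u, -, ha⟩
  ext x
  simp only [Equiv.Perm.mul_apply, ha, Equiv.Perm.one_apply, add_assoc, Vadd_self, add_zero]

lemma conj_mul_comm (n : ℕ) (g : Equiv.Perm (V n)) :
    ∀ a ∈ conjSub (T n) g, ∀ b ∈ conjSub (T n) g, a * b = b * a := by
  rintro a ⟨h, hh, rfl⟩ b ⟨k, hk, rfl⟩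
  rw [← map_mul, ← map_mul, T_mul_comm n h hh k hk]

lemma conj_sq (n : ℕ) (g : Equiv.Perm (V n)) :
    ∀ a ∈ conjSub (T n) g, a * a = 1 := by
  rintro a ⟨h, hh, rfl⟩
  rw [← map_mul, T_sq n h hh, map_one]

lemma key_translation (n : ℕ) (g : Equiv.Perm (V n)) (W : Submodule (ZMod 2) (V n))
    (hW : sigmaSub n W = T n ⊓ conjSub (T n) g)
    (t : Equiv.Perm (V n)) (ht : t ∈ conjSub (T n) g)
    (hcov : ∀ x : V n, x ∈ W ∨ x + t 0 ∈ W) :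
    ∀ x, t x = x + t 0 := by
  have hWle : ∀ w ∈ W, Equiv.addRight w ∈ conjSub (T n) g := fun w hw =>
    ((hW ▸ (⟨w, hw, fun _ => rfl⟩ : Equiv.addRight w ∈ sigmaSub n W)) :
      Equiv.addRight w ∈ T n ⊓ conjSub (T n) g).2
  have hw_case : ∀ w ∈ W, t w = w + t 0 := by
    intro w hw
    have hc := conj_mul_comm n g t ht _ (hWle w hw)
    have hc0 := DFunLike.congr_fun hc 0
    simp only [Equiv.Perm.mul_apply, Equiv.coe_addRight, zero_add] at hc0
    rw [hc0, add_comm]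
  intro x
  rcases hcov x with hx | hx
  · exact hw_case x hx
  · have hsq := DFunLike.congr_fun (conj_sq n g t ht) (x + t 0)
    simp only [Equiv.Perm.mul_apply, Equiv.Perm.one_apply] at hsq
    have h1 : t (x + t 0) = x := by
      rw [hw_case _ hx, add_assoc, Vadd_self, add_zero]
    rw [h1] at hsq
    rw [hsq]

/-- If `T ≠ T^g` and `σ_W = T ∩ T^g` for a subspace `W ≤ V`, then `dim W ≤ n - 2`. -/
theorem finrank_le_of_sigma_eq_inf_conj
    (n : ℕ) (hn : 2 < n) (g : Equiv.Perm (V n))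
    (hg : T n ≠ conjSub (T n) g)
    (W : Submodule (ZMod 2) (V n))
    (hW : sigmaSub n W = T n ⊓ conjSub (T n) g) :
    Module.finrank (ZMod 2) W ≤ n - 2 := by
  by_contra hlt
  push_neg at hlt
  have hfin : Module.finrank (ZMod 2) (V n) = n := Module.finrank_fin_fun (ZMod 2)
  by_cases htop : W = ⊤
  · subst htop
    have h1 : T n ≤ conjSub (T n) g := hW.le.trans inf_le_right
    have h2 : conjSub (T n) g ≤ T n := fun t ht =>
      ⟨t 0, trivial, key_translation n g ⊤ hW t ht (fun _ => Or.inl trivial)⟩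
    exact hg (le_antisymm h1 h2)
  · obtain ⟨v, hv⟩ : ∃ v, v ∉ W := by
      by_contra h
      push_neg at h
      exact htop (Submodule.eq_top_iff'.mpr h)
    set S := W ⊔ Submodule.span (ZMod 2) {v} with hS
    have hvS : v ∈ S := Submodule.mem_sup_right (Submodule.mem_span_singleton_self v)
    have hWS : W < S := lt_of_le_of_ne le_sup_left (fun h => hv (h ▸ hvS))
    have hrk : Module.finrank (ZMod 2) W < Module.finrank (ZMod 2) S :=
      Submodule.finrank_lt_finrank_of_lt hWS
    have hSn : Module.finrank (ZMod 2) S = n := by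
      have h1 : Module.finrank (ZMod 2) S ≤ n := by
        exact le_trans (Submodule.finrank_le S) (le_of_eq hfin)
      omega
    have hStop : S = ⊤ := Submodule.eq_top_of_finrank_eq (by rw [hSn, hfin])
    have hcov : ∀ x : V n, x ∈ W ∨ x + v ∈ W := by
      intro x
      have hxS : x ∈ S := hStop ▸ Submodule.mem_top
      obtain ⟨w, hw, z, hz, rfl⟩ := Submodule.mem_sup.mp hxS
      obtain ⟨a, rfl⟩ := Submodule.mem_span_singleton.mp hz
      rcases (by decide : ∀ a : ZMod 2, a = 0 ∨ a = 1) a with rfl | rfl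
      · left; simpa using hw
      · right
        rw [one_smul, add_assoc, Vadd_self, add_zero]
        exact hw
    set t : Equiv.Perm (V n) :=
      (MulAut.conj g⁻¹).toMonoidHom (Equiv.addRight (g v - g 0)) with htdef
    have ht : t ∈ conjSub (T n) g := ⟨_, mem_T n (g v - g 0), rfl⟩
    have ht0 : t 0 = v := by
      have : t 0 = g⁻¹ ((Equiv.addRight (g v - g 0)) (g 0)) := by
        simp [htdef, MulAut.conj_apply, Equiv.Perm.mul_apply]
      rw [this]
      simp only [Equiv.coe_addRight]
      have : g 0 + (g v - g 0) = g v := by abel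
      rw [this, show g⁻¹ (g v) = v from Equiv.symm_apply_apply g v]
    have htr := key_translation n g W hW t ht (by rw [ht0]; exact hcov)
    have htT : t ∈ T n := ⟨v, trivial, fun x => by rw [htr x, ht0]⟩
    have htsig : t ∈ sigmaSub n W := hW ▸ Subgroup.mem_inf.mpr ⟨htT, ht⟩
    obtain ⟨w, hwW, hweq⟩ := htsig
    have : v = w := by rw [← ht0, hweq 0, zero_add]
    exact hv (this ▸ hwW)
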